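/- Let D be a finite directed graph and let η be a real 1-cocycle class on D (an element of H¹(D; ℝ)) whose evaluation on every directed cycle of D is nonnegative. Then η is represented by a cocycle m : E(D) → ℝ taking nonnegative values on every directed edge. If moreover η is strictly positive on every directed cycle, then m can be chosen strictly positive on every directed edge. -/

import Mathlib

open scoped BigOperators

set_option linter.unusedSectionVars false
set_option linter.unnecessarySimpa false
set_option linter.unnecessarySeqFocus false
set_option linter.unreachableTactic false
set_option linter.unusedTactic false

namespace VeeringProof

variable {V E : Type} [Fintype E] {s t : E → V} {c : E → ℝ}
variable {V E : Type} [Fintype E] {s t : E → V} {c : E → ℝ}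

def wt (c : E → ℝ) (l : List E) : ℝ := (l.map c).sum

def IsCyc (s t : E → V) (l : List E) : Prop :=
  l ≠ [] ∧ l.Chain' (fun a b => t a = s b) ∧
    ∀ a ∈ l.getLast?, ∀ b ∈ l.head?, t a = s b

def IsPathTo (s t : E → V) (v : V) (l : List E) : Prop :=
  l.Chain' (fun a b => t a = s b) ∧ (∀ a ∈ l.getLast?, t a = v) ∧ l.Nodup

lemma wt_append (l₁ l₂ : List E) : wt c (l₁ ++ l₂) = wt c l₁ + wt c l₂ := by simp [wt]

lemma chain_getElem {l : List E} (h : l.Chain' (fun a b => t a = s b))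
    {i : ℕ} (hi : i + 1 < l.length) :
    t (l[i]'(by omega)) = s (l[i+1]'hi) := by
  have := List.isChain_iff_getElem.1 h i (by omega)
  simpa using this

lemma isCyc_of_getElem {l : List E} (hl : l ≠ [])
    (hch : l.Chain' (fun a b => t a = s b))
    (hw : t (l[l.length - 1]'(by have := List.length_pos_iff.2 hl; omega)) =
      s (l[0]'(List.length_pos_iff.2 hl))) : IsCyc s t l := by
  refine ⟨hl, hch, ?_⟩
  rw [List.getLast?_eq_getLast_of_ne_nil hl, List.head?_eq_head hl]
  rintro a ⟨rfl⟩ b ⟨rfl⟩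
  rwa [List.getLast_eq_getElem, List.head_eq_getElem_zero]

def Wset (s t : E → V) (c : E → ℝ) (v : V) : Set ℝ := wt c '' {l | IsPathTo s t v l}

lemma wset_finite (v : V) : (Wset s t c v).Finite := by
  apply Set.Finite.image
  apply (List.finite_length_le E (Fintype.card E)).subset
  intro l hl
  exact hl.2.2.length_le_card

lemma wset_nonempty (v : V) : (Wset s t c v).Nonempty :=
  ⟨0, ⟨[], ⟨List.isChain_nil, by simp, List.nodup_nil⟩, rfl⟩⟩

noncomputable def pot (s t : E → V) (c : E → ℝ) (v : V) : ℝ := sInf (Wset s t c v)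

lemma pot_le {v : V} {l : List E} (h : IsPathTo s t v l) : pot s t c v ≤ wt c l :=
  csInf_le (wset_finite v).bddBelow ⟨l, h, rfl⟩

lemma pot_mem (v : V) : ∃ l, IsPathTo s t v l ∧ wt c l = pot s t c v := by
  obtain ⟨l, hl, hw⟩ := (wset_nonempty v).csInf_mem (wset_finite (s := s) (t := t) (c := c) v)
  exact ⟨l, hl, hw⟩

lemma pot_step (hc : ∀ l, IsCyc s t l → 0 ≤ wt c l) (e : E) :
    pot s t c (t e) ≤ pot s t c (s e) + c e := by
  obtain ⟨P, ⟨hch, hend, hnd⟩, hw⟩ := pot_mem (s := s) (t := t) (c := c) (s e)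
  by_cases he : e ∈ P
  · obtain ⟨⟨j, hj⟩, hget⟩ := List.mem_iff_get.1 he
    simp only [List.get_eq_getElem] at hget
    have hPne : P ≠ [] := by rintro rfl; simp at he
    have hPlast : P[P.length - 1]'(by have := List.length_pos_iff.2 hPne; omega) ∈ P.getLast? := by
      rw [List.getLast?_eq_getLast_of_ne_nil hPne, List.getLast_eq_getElem]
      rfl
    have hPend : t (P[P.length - 1]'(by have := List.length_pos_iff.2 hPne; omega)) = s e :=
      hend _ hPlast
    -- the suffix starting at position j is a cycle
    set D := P.drop j with hD
    have hDlen : D.length = P.length - j := List.length_drop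
    have hDne : D ≠ [] := by
      apply List.ne_nil_of_length_pos; omega
    have hDcyc : IsCyc s t D := by
      apply isCyc_of_getElem hDne (hch.drop j)
      have h1 : D[D.length - 1]'(by have := List.length_pos_iff.2 hDne; omega)
          = P[P.length - 1]'(by have := List.length_pos_iff.2 hPne; omega) := by
        simp only [hD, List.getElem_drop, List.length_drop]
        exact getElem_congr_idx (by omega)
      have h2 : D[0]'(List.length_pos_iff.2 hDne) = P[j]'hj := by
        simp only [hD, List.getElem_drop, List.length_drop]
        exact getElem_congr_idx (by omega)
      rw [h1, h2, hget, hPend]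
    -- the prefix up to and including position j is a path to t e
    have hAeq : P.take j ++ [e] = P.take (j + 1) := by
      rw [← hget]; simpa using List.take_concat_get P j hj
    have hA : IsPathTo s t (t e) (P.take (j+1)) := by
      refine ⟨hch.take _, ?_, hnd.sublist (List.take_sublist _ _)⟩
      intro a ha
      rw [← hAeq, List.getLast?_append_of_ne_nil _ (by simp)] at ha
      simp only [List.getLast?_singleton, Option.mem_some_iff] at ha
      subst ha; rfl
    have h0 : 0 ≤ wt c D := hc D hDcyc
    have hsplit : wt c (P.take j) + wt c D = wt c P := by
      rw [← wt_append, hD, List.take_append_drop]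
    have hle := pot_le (c := c) hA
    rw [← hAeq, wt_append] at hle
    have hwe : wt c [e] = c e := by simp [wt]
    rw [hwe] at hle
    rw [← hw]
    linarith
  · have hP : IsPathTo s t (t e) (P ++ [e]) := by
      refine ⟨?_, ?_, ?_⟩
      · rw [show List.Chain' _ _ = List.IsChain _ _ from rfl, List.isChain_append]
        refine ⟨hch, List.isChain_singleton e, ?_⟩
        intro x hx y hy
        simp only [List.head?_cons, Option.mem_some_iff] at hy
        subst hy
        exact hend x hx
      · intro a ha
        rw [List.getLast?_append_of_ne_nil _ (by simp)] at ha
        simp only [List.getLast?_singleton, Option.mem_some_iff] at ha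
        subst ha; rfl
      · exact List.Nodup.append hnd (List.nodup_singleton e) (by simpa using he)
    have hle := pot_le (c := c) hP
    rw [wt_append] at hle
    have hwe : wt c [e] = c e := by simp [wt]
    rw [hwe, hw] at hle
    exact hle

lemma cyc_wrap {l : List E} (h : IsCyc s t l) (hl : l ≠ []) :
    t (l[l.length - 1]'(by have := List.length_pos_iff.2 hl; omega)) =
      s (l[0]'(List.length_pos_iff.2 hl)) := by
  have h3 := h.2.2
  rw [List.getLast?_eq_getLast_of_ne_nil hl, List.head?_eq_head hl] at h3
  have := h3 _ rfl _ rfl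
  rwa [List.getLast_eq_getElem, List.head_eq_getElem_zero] at this


lemma isCyc_rotate_one {l : List E} (h : IsCyc s t l) : IsCyc s t (l.rotate 1) := by
  obtain ⟨hne, hch, hwrap⟩ := h
  match l, hne with
  | [a], _ =>
    simpa using ⟨List.cons_ne_nil a [], List.isChain_singleton a, hwrap⟩
  | a :: b :: l'', _ =>
    rw [List.rotate_cons_succ, List.rotate_zero]
    rcases List.isChain_cons.1 hch with ⟨hhead, hch'⟩
    refine ⟨by simp, ?_, ?_⟩
    · rw [show List.Chain' _ _ = List.IsChain _ _ from rfl, List.isChain_append]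
      refine ⟨hch', List.isChain_singleton a, ?_⟩
      intro x hx y hy
      simp only [List.head?_cons, Option.mem_some_iff] at hy
      subst hy
      refine hwrap x ?_ a rfl
      show x ∈ (a :: (b :: l'')).getLast?
      rw [show a :: (b :: l'') = [a] ++ (b :: l'') from rfl,
        List.getLast?_append_of_ne_nil _ (by simp)]
      exact hx
    · intro x hx y hy
      rw [List.getLast?_append_of_ne_nil _ (by simp)] at hx
      have hx' : a = x := by simpa using hx
      have hy' : b = y := by simpa using hy
      rw [← hx', ← hy']
      exact hhead b rfl

lemma isCyc_rotate {l : List E} (h : IsCyc s t l) (n : ℕ) : IsCyc s t (l.rotate n) := by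
  induction n with
  | zero => simpa using h
  | succ n ih =>
    have : (l.rotate n).rotate 1 = l.rotate (n + 1) := by rw [List.rotate_rotate]
    rw [← this]
    exact isCyc_rotate_one ih

lemma wt_rotate (l : List E) (n : ℕ) : wt c (l.rotate n) = wt c l :=
  List.Perm.sum_eq (List.Perm.map c (List.rotate_perm l n))

/-- split a non-simple cycle into two shorter cycles -/
lemma cyc_split {l : List E} (h : IsCyc s t l) (hnd : ¬ l.Nodup) :
    ∃ l₁ l₂ : List E, IsCyc s t l₁ ∧ IsCyc s t l₂ ∧
      l₁.length + l₂.length = l.length ∧ wt c l₁ + wt c l₂ = wt c l ∧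
      0 < l₁.length ∧ 0 < l₂.length := by
  rw [List.nodup_iff_injective_get] at hnd
  rw [Function.not_injective_iff] at hnd
  obtain ⟨i, j, hij, hne⟩ := hnd
  wlog hlt : (i : ℕ) < (j : ℕ) generalizing i j
  · exact this j i hij.symm (Ne.symm hne) (by
      rcases Fin.lt_or_lt_of_ne hne with h' | h'
      · exact absurd h' hlt
      · exact h')
  have hjn : (j : ℕ) < l.length := j.2
  set l' := l.rotate (i : ℕ) with hl'
  have hlen' : l'.length = l.length := List.length_rotate l i
  have h' : IsCyc s t l' := isCyc_rotate h i
  set k := (j : ℕ) - (i : ℕ) with hk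
  have hk0 : 0 < k := by omega
  have hkn : k < l.length := by omega
  have hdup : l'[0]'(by omega) = l'[k]'(by omega) := by
    simp only [hl', List.getElem_rotate]
    have e1 : (0 + (i:ℕ)) % l.length = (i:ℕ) := by
      rw [Nat.zero_add]; exact Nat.mod_eq_of_lt i.2
    have e2 : (k + (i:ℕ)) % l.length = (j:ℕ) := by
      rw [show k + (i:ℕ) = (j:ℕ) from by omega]; exact Nat.mod_eq_of_lt j.2
    rw [getElem_congr_idx e1, getElem_congr_idx e2]
    simpa using hij
  refine ⟨l'.take k, l'.drop k, ?_, ?_, ?_, ?_, ?_, ?_⟩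
  · have htne : l'.take k ≠ [] := by
      apply List.ne_nil_of_length_pos
      rw [List.length_take]; omega
    apply isCyc_of_getElem htne (h'.2.1.take k)
    have e1 : (l'.take k)[(l'.take k).length - 1]'(by have := List.length_pos_iff.2 htne; omega)
        = l'[k-1]'(by omega) := by
      simp only [List.getElem_take, List.length_take]
      exact getElem_congr_idx (by omega)
    have e2 : (l'.take k)[0]'(List.length_pos_iff.2 htne) = l'[0]'(by omega) := by
      simp only [List.getElem_take]
    rw [e1, e2, hdup]
    have := chain_getElem h'.2.1 (i := k - 1) (by omega)
    convert this using 3 <;> omega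
  · have hdne : l'.drop k ≠ [] := by
      apply List.ne_nil_of_length_pos
      rw [List.length_drop]; omega
    apply isCyc_of_getElem hdne (h'.2.1.drop k)
    have e1 : (l'.drop k)[(l'.drop k).length - 1]'(by have := List.length_pos_iff.2 hdne; omega)
        = l'[l.length-1]'(by omega) := by
      simp only [List.getElem_drop, List.length_drop]
      exact getElem_congr_idx (by omega)
    have e2 : (l'.drop k)[0]'(List.length_pos_iff.2 hdne) = l'[k]'(by omega) := by
      simp only [List.getElem_drop]
      exact getElem_congr_idx (by omega)
    rw [e1, e2, ← hdup]
    have := cyc_wrap h' h'.1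
    convert this using 3 <;> omega
  · rw [List.length_take, List.length_drop]; omega
  · rw [← wt_append, List.take_append_drop, hl', wt_rotate]
  · rw [List.length_take]; omega
  · rw [List.length_drop]; omega

lemma cyc_to_fin {l : List E} (h : IsCyc s t l) :
    ∃ (n : ℕ) (γ : Fin (n + 1) → E),
      (∀ i, t (γ i) = s (γ (i + 1))) ∧ ∑ i, c (γ i) = (l.map c).sum := by
  obtain ⟨n, hn⟩ : ∃ n, l.length = n + 1 :=
    ⟨l.length - 1, by have := List.length_pos_iff.2 h.1; omega⟩
  refine ⟨n, fun i => l[(i : ℕ)]'(by omega), ?_, ?_⟩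
  · intro i
    rcases lt_or_eq_of_le (Nat.lt_succ_iff.1 i.2) with hi | hi
    · have hval : ((i + 1 : Fin (n+1)) : ℕ) = (i : ℕ) + 1 := by
        rw [Fin.val_add_one]
        have : i ≠ Fin.last n := by
          intro hh; rw [hh] at hi; simp at hi
        simp [this]
      show t (l[(i : ℕ)]'(by omega)) = s (l[((i + 1 : Fin (n+1)) : ℕ)]'(by omega))
      simp only [hval]
      exact chain_getElem h.2.1 (by omega)
    · have hil : i = Fin.last n := Fin.ext (by simpa using hi)
      have hval : ((i + 1 : Fin (n+1)) : ℕ) = 0 := by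
        rw [Fin.val_add_one]; simp [hil]
      show t (l[(i : ℕ)]'(by omega)) = s (l[((i + 1 : Fin (n+1)) : ℕ)]'(by omega))
      simp only [hval, ← hi]
      have := cyc_wrap h h.1
      simp only [hn] at this
      convert this using 3 <;> omega
  · have := Fin.sum_congr' (fun i : Fin l.length => c (l[(i : ℕ)]'i.2)) hn.symm
    rw [Fin.sum_univ_fun_getElem l c] at this
    exact this

lemma wt_sub_const (μ : ℝ) (l : List E) :
    wt (fun e => c e - μ) l = wt c l - μ * l.length := by
  induction l with
  | nil => simp [wt]
  | cons a l ih =>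
    simp only [wt, List.map_cons, List.sum_cons, List.length_cons] at *
    push_cast
    linarith

lemma exists_pos_mean (hpos : ∀ l, IsCyc s t l → 0 < wt c l) :
    ∃ μ > (0:ℝ), ∀ l, IsCyc s t l → μ * l.length ≤ wt c l := by
  classical
  set S : Set (List E) := {l | IsCyc s t l ∧ l.length ≤ Fintype.card E} with hS
  have hSfin : S.Finite := (List.finite_length_le E (Fintype.card E)).subset (fun l hl => hl.2)
  set M : Set ℝ := insert 1 ((fun l => wt c l / l.length) '' S) with hM
  have hMfin : M.Finite := (hSfin.image _).insert 1
  have hMne : M.Nonempty := ⟨1, Set.mem_insert _ _⟩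
  refine ⟨sInf M, ?_, ?_⟩
  · rcases hMne.csInf_mem hMfin with h1 | ⟨l, hl, h2⟩
    · rw [h1]; norm_num
    · rw [← h2]
      have hlp : (0:ℝ) < l.length := by
        exact_mod_cast List.length_pos_iff.2 hl.1.1
      exact div_pos (hpos l hl.1) hlp
  · have key : ∀ (n : ℕ) (l : List E), l.length = n → IsCyc s t l →
        sInf M * n ≤ wt c l := by
      intro n
      induction n using Nat.strong_induction_on with
      | _ n IH =>
        intro l hlen hcyc
        by_cases hle : l.length ≤ Fintype.card E
        · have hmem : wt c l / l.length ∈ M :=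
            Set.mem_insert_of_mem _ ⟨l, ⟨hcyc, hle⟩, rfl⟩
          have h1 : sInf M ≤ wt c l / l.length := csInf_le hMfin.bddBelow hmem
          have hlp : (0:ℝ) < l.length := by
            exact_mod_cast List.length_pos_iff.2 hcyc.1
          have h2 : sInf M * l.length ≤ (wt c l / l.length) * l.length :=
            mul_le_mul_of_nonneg_right h1 hlp.le
          rw [div_mul_cancel₀ _ hlp.ne'] at h2
          rw [← hlen]
          exact h2
        · have hnd : ¬ l.Nodup := fun h => hle h.length_le_card
          obtain ⟨l₁, l₂, h1, h2, hlen2, hwt, hp1, hp2⟩ := cyc_split (c := c) hcyc hnd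
          have i1 := IH l₁.length (by omega) l₁ rfl h1
          have i2 := IH l₂.length (by omega) l₂ rfl h2
          have hn : ((l₁.length : ℝ) + l₂.length) = (n : ℝ) := by
            exact_mod_cast congrArg (Nat.cast (R := ℝ)) (hlen ▸ hlen2)
          rw [← hn, mul_add]
          linarith
    intro l hcyc
    exact key l.length l rfl hcyc

end VeeringProof

open VeeringProof

/-- Let `D` be a finite directed graph (vertex set `V`, edge
set `E`, with source `s` and target `t`) and let `c : E → ℝ` be a cochain whose
sum over every directed cycle is nonnegative.  Then the cohomology class of `c`
is represented by a nonnegative cocycle, i.e. there is a potential `h : V → ℝ`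
with `c e + δh(e) ≥ 0` on every edge.  If `c` is strictly positive on every
directed cycle, the representative can be taken strictly positive on every
edge.  (Directed cycles of length `n + 1` are maps `Fin (n+1) → E` with
cyclically matching endpoints.) -/
theorem veering_nonnegative_cocycle_representative
    (V E : Type) [Fintype V] [Fintype E] (s t : E → V) (c : E → ℝ)
    (hnn : ∀ (n : ℕ) (γ : Fin (n + 1) → E),
      (∀ i, t (γ i) = s (γ (i + 1))) → 0 ≤ ∑ i, c (γ i)) :
    (∃ h : V → ℝ, ∀ e, 0 ≤ c e + (h (t e) - h (s e))) ∧
    ((∀ (n : ℕ) (γ : Fin (n + 1) → E),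
        (∀ i, t (γ i) = s (γ (i + 1))) → 0 < ∑ i, c (γ i)) →
      ∃ h : V → ℝ, ∀ e, 0 < c e + (h (t e) - h (s e))) := by
  constructor
  · have hc : ∀ l, IsCyc s t l → 0 ≤ wt c l := by
      intro l hl
      obtain ⟨n, γ, hγ, hsum⟩ := cyc_to_fin (c := c) hl
      calc (0:ℝ) ≤ ∑ i, c (γ i) := hnn n γ hγ
        _ = wt c l := hsum
    refine ⟨fun v => - pot s t c v, fun e => ?_⟩
    have h1 := pot_step hc e
    show (0:ℝ) ≤ c e + (- pot s t c (t e) - - pot s t c (s e))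
    linarith
  · intro hpos
    have hc : ∀ l, IsCyc s t l → 0 < wt c l := by
      intro l hl
      obtain ⟨n, γ, hγ, hsum⟩ := cyc_to_fin (c := c) hl
      calc (0:ℝ) < ∑ i, c (γ i) := hpos n γ hγ
        _ = wt c l := hsum
    obtain ⟨μ, hμ, hmean⟩ := exists_pos_mean hc
    have hc' : ∀ l, IsCyc s t l → 0 ≤ wt (fun e => c e - μ) l := by
      intro l hl
      rw [wt_sub_const]
      linarith [hmean l hl]
    refine ⟨fun v => - pot s t (fun e => c e - μ) v, fun e => ?_⟩
    have h1 := pot_step hc' e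
    show (0:ℝ) < c e + (- pot s t (fun e => c e - μ) (t e) - - pot s t (fun e => c e - μ) (s e))
    linarith
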